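/- Gaussian information balance as p_{I*} → 1: suppose (p_j)_{j≠I*} are positive numbers summing to 1 - p_{I*} satisfying the Gaussian information-balance equations (θ_{I*} - θ_i)²/(σ²/p_{I*} + σ²/p_i) = (θ_{I*} - θ_j)²/(σ²/p_{I*} + σ²/p_j) for all i, j ≠ I*, with θ_{I*} > θ_j for all j ≠ I*. Then as p_{I*} → 1, for each j ≠ I*, p_j/(1 - p_{I*}) → (θ_{I*} - θ_j)^{-2} / Σ_{i ≠ I*} (θ_{I*} - θ_i)^{-2}. -/

import Mathlib

open Filter

/-- Gaussian information balance as `p_{I*} → 1`: if for each exploitation rate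
`β ∈ (0,1)` the vector `p β` is a probability vector with `p β I* = β`, positive
off-`I*` entries, satisfying the Gaussian information-balance equations, then for
each suboptimal arm `j`, `p_j/(1-β) → (θ_{I*}-θ_j)^{-2} / Σ_{i≠I*} (θ_{I*}-θ_i)^{-2}`
as `β → 1`. -/
theorem gaussian_balance_limit
    {k : ℕ} (θ : Fin k → ℝ) (Istar : Fin k) (σ : ℝ) (hσ : 0 < σ)
    (hbest : ∀ j, j ≠ Istar → θ j < θ Istar)
    (p : ℝ → Fin k → ℝ)
    (hI : ∀ β ∈ Set.Ioo (0:ℝ) 1, p β Istar = β)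
    (hpos : ∀ β ∈ Set.Ioo (0:ℝ) 1, ∀ j, j ≠ Istar → 0 < p β j)
    (hsum : ∀ β ∈ Set.Ioo (0:ℝ) 1, ∑ j, p β j = 1)
    (hbal : ∀ β ∈ Set.Ioo (0:ℝ) 1, ∀ i, i ≠ Istar → ∀ j, j ≠ Istar →
      (θ Istar - θ i)^2 / (σ^2 / p β Istar + σ^2 / p β i) =
      (θ Istar - θ j)^2 / (σ^2 / p β Istar + σ^2 / p β j)) :
    ∀ j, j ≠ Istar →
      Tendsto (fun β => p β j / (1 - β)) (nhdsWithin 1 (Set.Ioo (0:ℝ) 1))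
        (nhds (((θ Istar - θ j)^2)⁻¹ /
          ∑ i ∈ Finset.univ.filter (· ≠ Istar), ((θ Istar - θ i)^2)⁻¹)) := by
  intro j hj
  set S := Finset.univ.filter (· ≠ Istar) with hS
  have hjS : j ∈ S := by simp [hS, hj]
  have hmemS : ∀ i ∈ S, i ≠ Istar := by intro i hi; simpa [hS] using hi
  have hΔ : ∀ i, i ≠ Istar → 0 < (θ Istar - θ i)^2 := by
    intro i hi
    have h := hbest i hi
    have : θ Istar - θ i ≠ 0 := by linarith
    positivity
  have hΔj : 0 < (θ Istar - θ j)^2 := hΔ j hj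
  set a : Fin k → ℝ := fun i => (θ Istar - θ i)^2 / (θ Istar - θ j)^2 with ha
  have haPos : ∀ i ∈ S, 0 < a i := fun i hi => div_pos (hΔ i (hmemS i hi)) hΔj
  set G : ℝ → ℝ := fun v => (1 - v)⁻¹ / ∑ i ∈ S, (a i - v)⁻¹ with hG
  set u : ℝ → ℝ := fun β => p β j / (p β j + β) with hu
  -- sum over suboptimal arms
  have hsumS : ∀ β ∈ Set.Ioo (0:ℝ) 1, ∑ i ∈ S, p β i = 1 - β := by
    intro β hβ
    have h := hsum β hβ
    rw [← Finset.sum_filter_add_sum_filter_not Finset.univ (· ≠ Istar) (p β)] at h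
    have h2 : Finset.univ.filter (fun i => ¬ i ≠ Istar) = {Istar} := by
      ext x; simp [eq_comm]
    rw [h2, Finset.sum_singleton, hI β hβ] at h
    linarith [h]
  -- key formula for each suboptimal arm
  have key : ∀ β ∈ Set.Ioo (0:ℝ) 1, ∀ i ∈ S, p β i = β * u β / (a i - u β) := by
    intro β hβ i hiS
    have hi := hmemS i hiS
    have hβ0 : 0 < β := hβ.1
    have ht : 0 < p β j := hpos β hβ j hj
    have hpi : 0 < p β i := hpos β hβ i hi
    have hbal' := hbal β hβ i hi j hj
    rw [hI β hβ] at hbal'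
    have hΔi : 0 < (θ Istar - θ i)^2 := hΔ i hi
    -- cross-multiplied form
    have E : (θ Istar - θ i)^2 * (p β j + β) * p β i
        = (θ Istar - θ j)^2 * (p β i + β) * p β j := by
      have d1 : σ^2 / β + σ^2 / p β i > 0 := by positivity
      have d2 : σ^2 / β + σ^2 / p β j > 0 := by positivity
      rw [div_eq_div_iff (ne_of_gt d1) (ne_of_gt d2)] at hbal'
      have hσ2 : σ^2 ≠ 0 := by positivity
      field_simp at hbal'
      have hσβ : σ^2 * β ≠ 0 := by positivity
      apply mul_right_cancel₀ hσβ
      linear_combination (σ^2 * β) * hbal'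
    have E' : p β i * ((θ Istar - θ i)^2 * (p β j + β) - (θ Istar - θ j)^2 * p β j)
        = (θ Istar - θ j)^2 * β * p β j := by linear_combination E
    have hDpos : 0 < (θ Istar - θ i)^2 * (p β j + β) - (θ Istar - θ j)^2 * p β j := by
      nlinarith [E', hpi, mul_pos (mul_pos hΔj hβ0) ht]
    have htβ : 0 < p β j + β := by linarith
    have hden : a i - u β ≠ 0 := by
      have : a i - u β = ((θ Istar - θ i)^2 * (p β j + β) - (θ Istar - θ j)^2 * p β j)
          / ((θ Istar - θ j)^2 * (p β j + β)) := by
        simp only [ha, hu]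
        have hne : θ Istar - θ j ≠ 0 := fun h => by rw [h] at hΔj; simp at hΔj
        field_simp
        try ring
      rw [this]
      positivity
    rw [eq_div_iff hden]
    simp only [ha, hu]
    have hne : θ Istar - θ j ≠ 0 := fun h => by rw [h] at hΔj; simp at hΔj
    field_simp
    nlinarith [E']
  -- pointwise identity p_j/(1-β) = G (u β)
  have heq : ∀ β ∈ Set.Ioo (0:ℝ) 1, p β j / (1 - β) = G (u β) := by
    intro β hβ
    have hβ0 : 0 < β := hβ.1
    have ht : 0 < p β j := hpos β hβ j hj
    have htβ : 0 < p β j + β := by linarith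
    have huβ : 0 < u β := div_pos ht htβ
    have hβu : β * u β ≠ 0 := by positivity
    have hrw : (1:ℝ) - β = β * u β * ∑ i ∈ S, (a i - u β)⁻¹ := by
      rw [← hsumS β hβ, Finset.mul_sum]
      exact Finset.sum_congr rfl fun i hi => by rw [key β hβ i hi, div_eq_mul_inv]
    have haj : a j = 1 := div_self (ne_of_gt hΔj)
    calc p β j / (1 - β)
        = (β * u β * (a j - u β)⁻¹) / (β * u β * ∑ i ∈ S, (a i - u β)⁻¹) := by
          rw [key β hβ j hjS, hrw]; ring
      _ = (a j - u β)⁻¹ / ∑ i ∈ S, (a i - u β)⁻¹ := mul_div_mul_left _ _ hβu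
      _ = G (u β) := by rw [haj]
  -- u → 0
  have hu0 : Tendsto u (nhdsWithin 1 (Set.Ioo (0:ℝ) 1)) (nhds 0) := by
    have hb : Tendsto (fun β : ℝ => (1 - β) / β) (nhdsWithin 1 (Set.Ioo (0:ℝ) 1)) (nhds 0) := by
      have : ContinuousAt (fun β : ℝ => (1 - β) / β) 1 := by
        apply ContinuousAt.div
        · exact (continuous_const.sub continuous_id).continuousAt
        · exact continuousAt_id
        · norm_num
      have h := this.tendsto.mono_left (nhdsWithin_le_nhds (s := Set.Ioo (0:ℝ) 1))
      simpa using h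
    apply squeeze_zero' ?_ ?_ hb
    · filter_upwards [self_mem_nhdsWithin] with β hβ
      have ht : 0 < p β j := hpos β hβ j hj
      have htβ : 0 < p β j + β := by linarith [hβ.1]
      exact le_of_lt (div_pos ht htβ)
    · filter_upwards [self_mem_nhdsWithin] with β hβ
      have hβ0 : 0 < β := hβ.1
      have ht : 0 < p β j := hpos β hβ j hj
      have ht1 : p β j ≤ 1 - β := by
        rw [← hsumS β hβ]
        exact Finset.single_le_sum (fun i hi => le_of_lt (hpos β hβ i (hmemS i hi))) hjS
      exact div_le_div₀ (by linarith) ht1 hβ0 (by linarith)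
  -- G continuous at 0
  have hden0 : 0 < ∑ i ∈ S, (a i - 0)⁻¹ := by
    apply Finset.sum_pos
    · intro i hi
      simp only [sub_zero]
      exact inv_pos.mpr (haPos i hi)
    · exact ⟨j, hjS⟩
  have hGc : ContinuousAt G 0 := by
    apply ContinuousAt.div
    · apply ContinuousAt.inv₀
      · exact (continuous_const.sub continuous_id).continuousAt
      · norm_num
    · exact tendsto_finset_sum S fun i hi =>
        ContinuousAt.inv₀ (continuous_const.sub continuous_id).continuousAt
          (by simpa using ne_of_gt (haPos i hi))
    · exact ne_of_gt hden0
  -- identify the limit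
  have hG0 : G 0 = ((θ Istar - θ j)^2)⁻¹ / ∑ i ∈ S, ((θ Istar - θ i)^2)⁻¹ := by
    have hsum' : ∑ i ∈ S, (a i)⁻¹
        = (θ Istar - θ j)^2 * ∑ i ∈ S, ((θ Istar - θ i)^2)⁻¹ := by
      rw [Finset.mul_sum]
      refine Finset.sum_congr rfl fun i hi => ?_
      simp only [ha]
      rw [inv_div, div_eq_mul_inv]
    simp only [hG, sub_zero, inv_one]
    rw [hsum', one_div, mul_inv, div_eq_mul_inv]
  have hfinal : Tendsto (fun β => G (u β)) (nhdsWithin 1 (Set.Ioo (0:ℝ) 1))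
      (nhds (((θ Istar - θ j)^2)⁻¹ / ∑ i ∈ S, ((θ Istar - θ i)^2)⁻¹)) := by
    rw [← hG0]
    exact hGc.tendsto.comp hu0
  refine hfinal.congr' ?_
  filter_upwards [self_mem_nhdsWithin] with β hβ
  exact (heq β hβ).symm
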